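/- arXiv:2303.16000 — 5 statements merged into one kernel-verified Lean document; each statement's English description precedes it below -/
import Mathlib

section
/- Let P be a polytope in ℝⁿ and let y₀ ∈ ℝⁿ \ {0}. Then there exist an open neighborhood U of y₀ and a face P' of P of dimension at most n−1 such that the support function of P' agrees with the support function of P on U. -/
variable {n : ℕ}

private lemma inner_isLinear (y : EuclideanSpace ℝ (Fin n)) :
    IsLinearMap ℝ (fun z : EuclideanSpace ℝ (Fin n) => (inner ℝ y z : ℝ)) :=
  ⟨fun a b => inner_add_right y a b, fun c a => real_inner_smul_right y a c⟩

private lemma sSup_inner_convexHull (T : Finset (EuclideanSpace ℝ (Fin n))) (hT : T.Nonempty)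
    (y : EuclideanSpace ℝ (Fin n)) :
    sSup ((fun z => (inner ℝ y z : ℝ)) '' convexHull ℝ (T : Set (EuclideanSpace ℝ (Fin n)))) =
      T.sup' hT (fun s => (inner ℝ y s : ℝ)) := by
  have himg : (fun z => (inner ℝ y z : ℝ)) '' convexHull ℝ (T : Set (EuclideanSpace ℝ (Fin n)))
      = convexHull ℝ ((fun z => (inner ℝ y z : ℝ)) '' (T : Set (EuclideanSpace ℝ (Fin n)))) :=
    (inner_isLinear y).image_convexHull _
  have hbound : (fun z => (inner ℝ y z : ℝ)) '' convexHull ℝ (T : Set (EuclideanSpace ℝ (Fin n)))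
      ⊆ Set.Iic (T.sup' hT (fun s => (inner ℝ y s : ℝ))) := by
    rw [himg]
    apply convexHull_min ?_ (convex_Iic _)
    rintro r ⟨s, hs, rfl⟩
    exact Finset.le_sup' (fun s => (inner ℝ y s : ℝ)) hs
  obtain ⟨s, hs, hsup⟩ := T.exists_mem_eq_sup' (H := hT) (fun s => (inner ℝ y s : ℝ))
  have hmem : T.sup' hT (fun s => (inner ℝ y s : ℝ))
      ∈ (fun z => (inner ℝ y z : ℝ)) '' convexHull ℝ (T : Set (EuclideanSpace ℝ (Fin n))) :=
    ⟨s, subset_convexHull ℝ _ hs, hsup.symm⟩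
  exact le_antisymm (csSup_le ⟨_, hmem⟩ fun r hr => hbound hr)
    (le_csSup ⟨_, fun r hr => hbound hr⟩ hmem)

open EuclideanSpace in
/-- Support function of the face of a polytope agrees with that of the polytope
near any nonzero direction, and the face has dimension at most `n - 1`. -/
theorem stmt0 (n : ℕ) (S : Finset (EuclideanSpace ℝ (Fin n))) (hS : S.Nonempty)
    (y₀ : EuclideanSpace ℝ (Fin n)) (hy₀ : y₀ ≠ 0) :
    ∃ U : Set (EuclideanSpace ℝ (Fin n)), IsOpen U ∧ y₀ ∈ U ∧
      Module.finrank ℝ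
        (vectorSpan ℝ {x ∈ convexHull ℝ (S : Set (EuclideanSpace ℝ (Fin n))) |
          (inner ℝ x y₀ : ℝ) =
            sSup ((fun z => (inner ℝ y₀ z : ℝ)) '' convexHull ℝ (S : Set (EuclideanSpace ℝ (Fin n))))})
        ≤ n - 1 ∧
      ∀ y ∈ U,
        sSup ((fun z => (inner ℝ y z : ℝ)) ''
            {x ∈ convexHull ℝ (S : Set (EuclideanSpace ℝ (Fin n))) |
              (inner ℝ x y₀ : ℝ) =
                sSup ((fun z => (inner ℝ y₀ z : ℝ)) ''
                  convexHull ℝ (S : Set (EuclideanSpace ℝ (Fin n))))}) =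
          sSup ((fun z => (inner ℝ y z : ℝ)) '' convexHull ℝ (S : Set (EuclideanSpace ℝ (Fin n)))) := by
  classical
  set P : Set (EuclideanSpace ℝ (Fin n)) := convexHull ℝ (S : Set (EuclideanSpace ℝ (Fin n))) with hP
  set M : ℝ := S.sup' hS (fun s => (inner ℝ y₀ s : ℝ)) with hM
  have hsupP : sSup ((fun z => (inner ℝ y₀ z : ℝ)) '' P) = M := sSup_inner_convexHull S hS y₀
  set F : Set (EuclideanSpace ℝ (Fin n)) := {x ∈ P | (inner ℝ x y₀ : ℝ) =
      sSup ((fun z => (inner ℝ y₀ z : ℝ)) '' P)} with hF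
  have hFalt : F = {x ∈ P | (inner ℝ y₀ x : ℝ) = M} := by
    rw [hF, hsupP]
    ext x
    rw [Set.mem_setOf_eq, Set.mem_setOf_eq, real_inner_comm x y₀]
  set S' : Finset (EuclideanSpace ℝ (Fin n)) := S.filter (fun s => (inner ℝ y₀ s : ℝ) = M) with hS'
  have hS'ne : S'.Nonempty := by
    obtain ⟨s, hs, hsup⟩ := S.exists_mem_eq_sup' (H := hS) (fun s => (inner ℝ y₀ s : ℝ))
    exact ⟨s, Finset.mem_filter.2 ⟨hs, hsup.symm⟩⟩
  have hS'sub : (S' : Set (EuclideanSpace ℝ (Fin n))) ⊆ (S : Set (EuclideanSpace ℝ (Fin n))) := by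
    intro x hx; exact Finset.mem_coe.2 (Finset.filter_subset _ _ (Finset.mem_coe.1 hx))
  set U : Set (EuclideanSpace ℝ (Fin n)) := {y | ∀ s ∈ S, s ∉ S' → (inner ℝ y s : ℝ) < S'.sup' hS'ne (fun t => (inner ℝ y t : ℝ))}
    with hU
  refine ⟨U, ?_, ?_, ?_, ?_⟩
  · -- openness
    have : U = ⋂ s ∈ (S \ S' : Finset (EuclideanSpace ℝ (Fin n))),
        {y : (EuclideanSpace ℝ (Fin n)) | (inner ℝ y s : ℝ) < S'.sup' hS'ne (fun t => (inner ℝ y t : ℝ))} := by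
      ext y
      simp only [hU, Set.mem_setOf_eq, Set.mem_iInter, Finset.mem_sdiff]
      exact ⟨fun h s hs => h s hs.1 hs.2, fun h s hs hs' => h s ⟨hs, hs'⟩⟩
    rw [this]
    refine Set.Finite.isOpen_biInter (Finset.finite_toSet _) fun s _ => ?_
    apply isOpen_lt
    · exact Continuous.inner continuous_id continuous_const
    · exact Continuous.finset_sup'_apply hS'ne fun t _ =>
        Continuous.inner continuous_id continuous_const
  · -- y₀ ∈ U
    intro s hs hs'
    have h1 : (inner ℝ y₀ s : ℝ) < M := by
      have hle : (inner ℝ y₀ s : ℝ) ≤ M := Finset.le_sup' _ hs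
      have hne : (inner ℝ y₀ s : ℝ) ≠ M := fun h => hs' (Finset.mem_filter.2 ⟨hs, h⟩)
      exact lt_of_le_of_ne hle hne
    have h2 : S'.sup' hS'ne (fun t => (inner ℝ y₀ t : ℝ)) = M := by
      obtain ⟨t, ht, hsup⟩ := S'.exists_mem_eq_sup' (H := hS'ne) (fun t => (inner ℝ y₀ t : ℝ))
      rw [hsup]; exact (Finset.mem_filter.1 ht).2
    rw [h2]; exact h1
  · -- dimension
    set φ : (EuclideanSpace ℝ (Fin n)) →ₗ[ℝ] ℝ := (inner_isLinear y₀).mk' _ with hφ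
    have hφapp : ∀ x, φ x = (inner ℝ y₀ x : ℝ) := fun x => rfl
    have hφne : φ ≠ 0 := by
      intro h
      apply hy₀
      have := congrArg (fun f => f y₀) h
      simp only [hφapp, LinearMap.zero_apply] at this
      exact inner_self_eq_zero.1 this
    have hker : Module.finrank ℝ (LinearMap.ker φ) = n - 1 := by
      have hrange : LinearMap.range φ = ⊤ := by
        rw [LinearMap.range_eq_top]
        intro r
        refine ⟨(r / (inner ℝ y₀ y₀ : ℝ)) • y₀, ?_⟩
        have hy0 : (inner ℝ y₀ y₀ : ℝ) ≠ 0 := fun h => hy₀ (inner_self_eq_zero.1 h)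
        rw [hφapp, real_inner_smul_right]
        exact div_mul_cancel₀ r hy0
      have h1 := LinearMap.finrank_range_add_finrank_ker φ
      rw [hrange] at h1
      simp only [finrank_top, Module.finrank_self] at h1
      have h2 : Module.finrank ℝ (EuclideanSpace ℝ (Fin n)) = n := finrank_euclideanSpace_fin
      omega
    have hle : vectorSpan ℝ F ≤ LinearMap.ker φ := by
      rw [vectorSpan, Submodule.span_le]
      rintro v ⟨a, ha, b, hb, rfl⟩
      rw [hFalt] at ha hb
      simp only [Set.mem_setOf_eq] at ha hb
      simp only [SetLike.mem_coe, LinearMap.mem_ker]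
      have h0 : φ (a - b) = 0 := by
        rw [map_sub, hφapp, hφapp, ha.2, hb.2, sub_self]
      simpa [vsub_eq_sub] using h0
    calc Module.finrank ℝ (vectorSpan ℝ F) ≤ Module.finrank ℝ (LinearMap.ker φ) :=
          Submodule.finrank_mono hle
      _ = n - 1 := hker
  · -- support function agreement
    intro y hy
    have hS'sup : S.sup' hS (fun s => (inner ℝ y s : ℝ)) = S'.sup' hS'ne (fun s => (inner ℝ y s : ℝ)) := by
      apply le_antisymm
      · obtain ⟨s, hs, hsup⟩ := S.exists_mem_eq_sup' (H := hS) (fun s => (inner ℝ y s : ℝ))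
        rw [hsup]
        by_cases h : s ∈ S'
        · exact Finset.le_sup' _ h
        · exact (hy s hs h).le
      · exact Finset.sup'_le _ _ fun t ht => Finset.le_sup' _ (Finset.filter_subset _ _ ht)
    have hsub1 : convexHull ℝ (S' : Set (EuclideanSpace ℝ (Fin n))) ⊆ F := by
      rw [hFalt]
      apply convexHull_min ?_ ?_
      · intro x hx
        refine ⟨subset_convexHull ℝ _ (hS'sub hx), (Finset.mem_filter.1 hx).2⟩
      · have : Convex ℝ {x : (EuclideanSpace ℝ (Fin n)) | (inner ℝ y₀ x : ℝ) = M} :=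
          convex_hyperplane (inner_isLinear y₀) M
        exact (convex_convexHull ℝ _).inter this
    have hFP : F ⊆ P := fun x hx => hx.1
    have hbddP : BddAbove ((fun z => (inner ℝ y z : ℝ)) '' P) := by
      refine ⟨S.sup' hS (fun s => (inner ℝ y s : ℝ)), ?_⟩
      intro r hr
      have himg : (fun z => (inner ℝ y z : ℝ)) '' P
          = convexHull ℝ ((fun z => (inner ℝ y z : ℝ)) '' (S : Set (EuclideanSpace ℝ (Fin n)))) :=
        (inner_isLinear y).image_convexHull _
      rw [himg] at hr
      have : convexHull ℝ ((fun z => (inner ℝ y z : ℝ)) '' (S : Set (EuclideanSpace ℝ (Fin n))))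
          ⊆ Set.Iic (S.sup' hS (fun s => (inner ℝ y s : ℝ))) := by
        apply convexHull_min ?_ (convex_Iic _)
        rintro r ⟨s, hs, rfl⟩
        exact Finset.le_sup' (fun s => (inner ℝ y s : ℝ)) hs
      exact this hr
    have hFne : F.Nonempty := by
      obtain ⟨t, ht⟩ := hS'ne
      exact ⟨t, hsub1 (subset_convexHull ℝ _ ht)⟩
    apply le_antisymm
    · exact csSup_le_csSup hbddP (hFne.image _) (Set.image_mono hFP)
    · rw [sSup_inner_convexHull S hS y, hS'sup, ← sSup_inner_convexHull S' hS'ne y]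
      exact csSup_le_csSup (BddAbove.mono (Set.image_mono hFP) hbddP)
        ((convexHull_nonempty_iff.2 ⟨_, hS'ne.choose_spec⟩).image _)
        (Set.image_mono hsub1)
end

section
/- A sequence (K_j) of nonempty compact convex subsets of ℝⁿ converges to a nonempty compact convex set K in the Hausdorff metric if and only if the support functions h_{K_j} converge to h_K uniformly on every compact subset of ℝⁿ. -/
open Metric Filter

noncomputable def sf {n : ℕ} (S : Set (EuclideanSpace ℝ (Fin n)))
    (y : EuclideanSpace ℝ (Fin n)) : ℝ :=
  sSup ((fun x => (inner ℝ y x : ℝ)) '' S)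

lemma sf_cont {n : ℕ} (y : EuclideanSpace ℝ (Fin n)) :
    Continuous fun x : EuclideanSpace ℝ (Fin n) => (inner ℝ y x : ℝ) :=
  continuous_const.inner continuous_id

lemma sf_le {n : ℕ} (K L : Set (EuclideanSpace ℝ (Fin n))) (hKc : IsCompact K)
    (hKne : K.Nonempty) (hLc : IsCompact L) (hLne : L.Nonempty)
    (y : EuclideanSpace ℝ (Fin n)) :
    sf K y ≤ sf L y + ‖y‖ * hausdorffDist K L := by
  have himg : IsCompact ((fun x => (inner ℝ y x : ℝ)) '' K) := hKc.image (sf_cont y)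
  have hmem : sf K y ∈ (fun x => (inner ℝ y x : ℝ)) '' K :=
    himg.sSup_mem (hKne.image _)
  obtain ⟨x, hxK, hx⟩ := hmem
  have hfin : EMetric.hausdorffEdist K L ≠ ⊤ :=
    Metric.hausdorffEdist_ne_top_of_nonempty_of_bounded hKne hLne hKc.isBounded hLc.isBounded
  have hinf : infDist x L ≤ hausdorffDist K L :=
    infDist_le_hausdorffDist_of_mem hxK hfin
  obtain ⟨z, hzL, hdz⟩ := hLc.exists_infDist_eq_dist hLne x
  have hz_le : (inner ℝ y z : ℝ) ≤ sf L y :=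
    le_csSup ((hLc.image (sf_cont y)).bddAbove) ⟨z, hzL, rfl⟩
  have h1 : (inner ℝ y (x - z) : ℝ) ≤ ‖y‖ * dist x z := by
    calc (inner ℝ y (x - z) : ℝ) ≤ ‖y‖ * ‖x - z‖ := real_inner_le_norm _ _
    _ = ‖y‖ * dist x z := by rw [dist_eq_norm]
  have h2 : ‖y‖ * dist x z ≤ ‖y‖ * hausdorffDist K L := by
    apply mul_le_mul_of_nonneg_left _ (norm_nonneg y)
    rw [← hdz]; exact hinf
  have : (inner ℝ y x : ℝ) = inner ℝ y z + inner ℝ y (x - z) := by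
    rw [inner_sub_right]; ring
  rw [← hx]
  show (inner ℝ y x : ℝ) ≤ _
  linarith

lemma abs_sf_sub_le {n : ℕ} (K L : Set (EuclideanSpace ℝ (Fin n))) (hKc : IsCompact K)
    (hKne : K.Nonempty) (hLc : IsCompact L) (hLne : L.Nonempty)
    (y : EuclideanSpace ℝ (Fin n)) :
    |sf K y - sf L y| ≤ ‖y‖ * hausdorffDist K L := by
  rw [abs_sub_le_iff]
  refine ⟨by linarith [sf_le K L hKc hKne hLc hLne y], ?_⟩
  have := sf_le L K hLc hLne hKc hKne y
  rw [hausdorffDist_comm] at this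
  linarith

lemma infDist_le_of_sf {n : ℕ} (K L : Set (EuclideanSpace ℝ (Fin n)))
    (hKc : IsCompact K) (hLc : IsCompact L) (hLne : L.Nonempty) (hLconv : Convex ℝ L)
    (c : ℝ) (hc : 0 ≤ c)
    (h : ∀ y : EuclideanSpace ℝ (Fin n), ‖y‖ ≤ 1 → sf K y - sf L y ≤ c)
    (x : EuclideanSpace ℝ (Fin n)) (hx : x ∈ K) : infDist x L ≤ c := by
  obtain ⟨z, hzL, hdz⟩ := hLc.exists_infDist_eq_dist hLne x
  rcases eq_or_ne x z with rfl | hxz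
  · rw [hdz, dist_self]; exact hc
  have hd0 : (0:ℝ) < ‖x - z‖ := by
    rw [norm_pos_iff, sub_ne_zero]; exact hxz
  set y : EuclideanSpace ℝ (Fin n) := ‖x - z‖⁻¹ • (x - z) with hy
  have hny : ‖y‖ = 1 := by
    rw [hy, norm_smul, norm_inv, norm_norm, inv_mul_cancel₀ hd0.ne']
  -- z is the nearest point, so the obtuse angle condition holds
  have hiInf : ‖x - z‖ = ⨅ w : L, ‖x - w‖ := by
    have : infDist x L = ⨅ w : L, dist x w := infDist_eq_iInf
    rw [hdz] at this
    simp only [dist_eq_norm] at this ⊢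
    exact this
  have hproj : ∀ w ∈ L, (inner ℝ (x - z) (w - z) : ℝ) ≤ 0 :=
    (norm_eq_iInf_iff_real_inner_le_zero hLconv hzL).mp hiInf
  have hzsup : sf L y ≤ (inner ℝ y z : ℝ) := by
    apply csSup_le (hLne.image _)
    rintro a ⟨w, hwL, rfl⟩
    have : (inner ℝ y (w - z) : ℝ) ≤ 0 := by
      rw [hy, real_inner_smul_left]
      exact mul_nonpos_of_nonneg_of_nonpos (inv_nonneg.mpr hd0.le) (hproj w hwL)
    have h2 : (inner ℝ y w : ℝ) = inner ℝ y z + inner ℝ y (w - z) := by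
      rw [inner_sub_right]; ring
    simp only [h2]
    linarith
  have hxsup : (inner ℝ y x : ℝ) ≤ sf K y :=
    le_csSup ((hKc.image (sf_cont y)).bddAbove) ⟨x, hx, rfl⟩
  have hkey : (inner ℝ y (x - z) : ℝ) = ‖x - z‖ := by
    rw [hy, real_inner_smul_left, real_inner_self_eq_norm_sq]
    field_simp
  have hsplit : (inner ℝ y x : ℝ) = inner ℝ y z + inner ℝ y (x - z) := by
    rw [inner_sub_right]; ring
  have : infDist x L = (inner ℝ y x : ℝ) - inner ℝ y z := by
    rw [hdz, dist_eq_norm, ← hkey, hsplit]; ring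
  rw [this]
  have := h y (le_of_eq hny)
  linarith

/-- Hausdorff convergence of nonempty compact convex sets is equivalent to
locally uniform convergence of the support functions. -/
theorem stmt2 (n : ℕ) (K : ℕ → Set (EuclideanSpace ℝ (Fin n))) (L : Set (EuclideanSpace ℝ (Fin n)))
    (hKne : ∀ j, (K j).Nonempty) (hKc : ∀ j, IsCompact (K j)) (hKconv : ∀ j, Convex ℝ (K j))
    (hLne : L.Nonempty) (hLc : IsCompact L) (hLconv : Convex ℝ L) :
    Filter.Tendsto (fun j => Metric.hausdorffDist (K j) L) Filter.atTop (nhds 0) ↔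
      ∀ C : Set (EuclideanSpace ℝ (Fin n)), IsCompact C →
        TendstoUniformlyOn (fun j y => sSup ((fun x => (inner ℝ y x : ℝ)) '' K j))
          (fun y => sSup ((fun x => (inner ℝ y x : ℝ)) '' L)) Filter.atTop C := by
  constructor
  · intro hconv C hC
    obtain ⟨r, hr⟩ := hC.isBounded.subset_closedBall 0
    set R : ℝ := max r 0 with hR
    have hR0 : 0 ≤ R := le_max_right _ _
    rw [Metric.tendstoUniformlyOn_iff]
    intro ε hε
    have hδ : 0 < ε / (R + 1) := by positivity
    filter_upwards [hconv.eventually (gt_mem_nhds hδ)] with j hj y hyC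
    have hyR : ‖y‖ ≤ R := by
      have := hr hyC
      rw [Metric.mem_closedBall, dist_zero_right] at this
      exact this.trans (le_max_left _ _)
    have habs := abs_sf_sub_le L (K j) hLc hLne (hKc j) (hKne j) y
    rw [hausdorffDist_comm] at habs
    have hdist : dist (sSup ((fun x => (inner ℝ y x : ℝ)) '' L))
        (sSup ((fun x => (inner ℝ y x : ℝ)) '' K j)) = |sf L y - sf (K j) y| := by
      rw [Real.dist_eq]; rfl
    rw [hdist]
    have hdH0 : 0 ≤ hausdorffDist (K j) L := hausdorffDist_nonneg
    have h1 : ‖y‖ * hausdorffDist (K j) L ≤ R * hausdorffDist (K j) L :=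
      mul_le_mul_of_nonneg_right hyR hdH0
    have h2 : R * hausdorffDist (K j) L < ε := by
      calc R * hausdorffDist (K j) L ≤ R * (ε / (R + 1)) :=
            mul_le_mul_of_nonneg_left hj.le hR0
        _ < ε := by
            rw [mul_div_assoc']
            rw [div_lt_iff₀ (by linarith)]
            nlinarith
    linarith
  · intro h
    have hu := h (Metric.closedBall 0 1) (isCompact_closedBall 0 1)
    rw [Metric.tendstoUniformlyOn_iff] at hu
    rw [Metric.tendsto_atTop]
    intro ε hε
    obtain ⟨N, hN⟩ := Filter.eventually_atTop.mp (hu (ε/2) (by positivity))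
    refine ⟨N, fun j hj => ?_⟩
    have hb : ∀ y : EuclideanSpace ℝ (Fin n), ‖y‖ ≤ 1 →
        |sf (K j) y - sf L y| ≤ ε / 2 := by
      intro y hy
      have := hN j hj y (by rwa [Metric.mem_closedBall, dist_zero_right])
      rw [Real.dist_eq] at this
      rw [abs_sub_comm]
      exact this.le
    have hdle : hausdorffDist (K j) L ≤ ε / 2 := by
      apply hausdorffDist_le_of_infDist (by positivity)
      · intro x hx
        refine infDist_le_of_sf (K j) L (hKc j) hLc hLne hLconv (ε/2) (by positivity)
          (fun y hy => ?_) x hx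
        have := hb y hy
        have := abs_le.mp this
        linarith [this.2]
      · intro x hx
        refine infDist_le_of_sf L (K j) hLc (hKc j) (hKne j) (hKconv j) (ε/2) (by positivity)
          (fun y hy => ?_) x hx
        have := hb y hy
        have := abs_le.mp this
        linarith [this.1]
    rw [Real.dist_eq, sub_zero, abs_of_nonneg hausdorffDist_nonneg]
    linarith
end

section
/- The ideal of polynomial functions on the space of complex symmetric n×n matrices that vanish on all symmetric matrices of rank strictly less than k is a prime ideal. -/
open MvPolynomial
open scoped Matrix

/-- The ideal of polynomial functions on the space of complex symmetric `n×n`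
matrices (coordinates indexed by pairs `i ≤ j`) vanishing on all symmetric
matrices of rank strictly less than `k`. -/
noncomputable def vanishingIdealRankLT (n k : ℕ) :
    Ideal (MvPolynomial {p : Fin n × Fin n // p.1 ≤ p.2} ℂ) where
  carrier := {P | ∀ A : Matrix (Fin n) (Fin n) ℂ, A.IsSymm → A.rank < k →
    MvPolynomial.eval (fun v => A v.1.1 v.1.2) P = 0}
  zero_mem' := by intro A _ _; simp
  add_mem' := by
    intro P Q hP hQ A hA hr
    simp [map_add, hP A hA hr, hQ A hA hr]
  smul_mem' := by
    intro c P hP A hA hr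
    simp [smul_eq_mul, map_mul, hP A hA hr]

set_option maxRecDepth 4000
set_option maxHeartbeats 1000000

namespace Stmt8Aux

variable {n : ℕ}

lemma rank_add_le (A B : Matrix (Fin n) (Fin n) ℂ) :
    (A + B).rank ≤ A.rank + B.rank := by
  rw [Matrix.rank, Matrix.rank, Matrix.rank]
  have h : LinearMap.range (A + B).mulVecLin ≤
      LinearMap.range A.mulVecLin ⊔ LinearMap.range B.mulVecLin := by
    rintro x ⟨y, rfl⟩
    simp only [Matrix.mulVecLin_add, LinearMap.add_apply]
    exact Submodule.add_mem_sup (LinearMap.mem_range_self _ y) (LinearMap.mem_range_self _ y)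
  exact (Submodule.finrank_mono h).trans
    (Submodule.finrank_add_le_finrank_add_finrank _ _)

lemma rank_sum_le {ι : Type*} (s : Finset ι) (f : ι → Matrix (Fin n) (Fin n) ℂ) :
    (∑ i ∈ s, f i).rank ≤ ∑ i ∈ s, (f i).rank := by
  classical
  induction s using Finset.induction with
  | empty => simp
  | insert _ _ hx ih =>
    rw [Finset.sum_insert hx, Finset.sum_insert hx]
    exact (rank_add_le _ _).trans (by gcongr)

lemma rank_vecMulVec_le (u v : Fin n → ℂ) : (Matrix.vecMulVec u v).rank ≤ 1 := by
  rw [Matrix.vecMulVec_eq Unit]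
  exact (Matrix.rank_mul_le_left _ _).trans
    ((Matrix.rank_le_card_width _).trans (by simp))

lemma decomp (k : ℕ) (A : Matrix (Fin n) (Fin n) ℂ) (hA : A.IsSymm) (hr : A.rank ≤ k) :
    ∃ (lam : Fin k → ℂ) (a : Fin k → Fin n → ℂ),
      ∀ p q, A p q = ∑ i, lam i * a i p * a i q := by
  classical
  set B := Matrix.toBilin' A with hBdef
  have hsymm : B.IsSymm := by
    rw [LinearMap.BilinForm.isSymm_def]
    intro xx yy
    simp only [RingHom.id_apply, hBdef, Matrix.toBilin'_apply]
    rw [Finset.sum_comm]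
    refine Finset.sum_congr rfl fun i _ => Finset.sum_congr rfl fun j _ => ?_
    rw [← hA.apply i j]
    ring
  obtain ⟨v, hv⟩ := LinearMap.BilinForm.exists_orthogonal_basis (LinearMap.BilinForm.isSymm_iff.mp hsymm)
  set d : Fin (Module.finrank ℂ (Fin n → ℂ)) → ℂ := fun i => B (v i) (v i) with hd
  set c : Fin (Module.finrank ℂ (Fin n → ℂ)) → Fin n → ℂ := fun i p => v.repr (Pi.single p 1) i with hc
  -- key identity
  have key : ∀ p q, A p q = ∑ i, d i * (c i p * c i q) := by
    intro p q
    have h1 : A p q = B (Pi.single p 1) (Pi.single q 1) := (Matrix.toBilin'_single A p q).symm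
    rw [h1]
    conv_lhs => rw [← v.sum_repr (Pi.single p 1), ← v.sum_repr (Pi.single q 1)]
    simp only [map_sum, map_smul, LinearMap.coe_sum, Finset.sum_apply,
      LinearMap.smul_apply, smul_eq_mul]
    refine Finset.sum_congr rfl fun i _ => ?_
    rw [Finset.sum_eq_single i]
    · rw [hd, hc]; ring
    · intro j _ hj
      rw [LinearMap.isOrthoᵢ_def.mp hv _ _ hj]
      ring
    · intro h; exact absurd (Finset.mem_univ i) h
  -- matrices relating A and the diagonal of d
  set N : Matrix (Fin (Module.finrank ℂ (Fin n → ℂ))) (Fin n) ℂ :=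
    Matrix.of fun i p => c i p with hN
  set V : Matrix (Fin n) (Fin (Module.finrank ℂ (Fin n → ℂ))) ℂ :=
    Matrix.of fun p j => v j p with hV
  have hNV : N * V = 1 := by
    ext i j
    rw [Matrix.mul_apply, Matrix.one_apply]
    have hvj : v j = ∑ p : Fin n, v j p • (Pi.single p 1 : Fin n → ℂ) := by
      funext pp
      rw [Finset.sum_apply]
      simp [Pi.single_apply]
    have h2 : ∑ p, N i p * V p j = v.repr (v j) i := by
      conv_rhs => rw [hvj]
      rw [map_sum, Finsupp.coe_finset_sum, Finset.sum_apply]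
      refine Finset.sum_congr rfl fun pp _ => ?_
      rw [map_smul, Finsupp.smul_apply, smul_eq_mul]
      simp only [hN, hV, hc, Matrix.of_apply]
      ring
    rw [h2, Module.Basis.repr_self_apply]
    by_cases hij : i = j <;> simp [hij, eq_comm]
  have hAD : A = Nᵀ * (Matrix.diagonal d * N) := by
    ext p q
    rw [key, Matrix.mul_apply]
    refine Finset.sum_congr rfl fun i _ => ?_
    rw [Matrix.transpose_apply, Matrix.diagonal_mul]
    simp only [hN, Matrix.of_apply]
    ring
  have hdiag : Vᵀ * (A * V) = Matrix.diagonal d := by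
    calc Vᵀ * (A * V) = (N * V)ᵀ * (Matrix.diagonal d * (N * V)) := by
          rw [hAD]; simp only [Matrix.transpose_mul, Matrix.mul_assoc]
      _ = Matrix.diagonal d := by rw [hNV]; simp
  have hcard : Fintype.card {i // d i ≠ 0} ≤ k := by
    rw [← Matrix.rank_diagonal d, ← hdiag]
    exact (Matrix.rank_mul_le_right _ _).trans ((Matrix.rank_mul_le_left _ _).trans hr)
  set s : Finset _ := Finset.univ.filter (fun i => d i ≠ 0) with hs
  have hsk : s.card ≤ k := le_trans (le_of_eq (Fintype.card_subtype _).symm) hcard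
  set e := s.orderIsoOfFin rfl with he
  refine ⟨fun j => if h : (j : ℕ) < s.card then d (e ⟨j, h⟩) else 0,
          fun j p => if h : (j : ℕ) < s.card then c (e ⟨j, h⟩) p else 0, ?_⟩
  intro p q
  rw [key p q]
  set F : Fin (Module.finrank ℂ (Fin n → ℂ)) → ℂ := fun i => d i * (c i p * c i q) with hF
  set g : ℕ → ℂ := fun m => if h : m < s.card then F (e ⟨m, h⟩) else 0 with hg
  have h1 : ∀ j : Fin k,
      (if h : (j:ℕ) < s.card then d (e ⟨j,h⟩) else 0) *
      (if h : (j:ℕ) < s.card then c (e ⟨j,h⟩) p else 0) *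
      (if h : (j:ℕ) < s.card then c (e ⟨j,h⟩) q else 0) = g (j : ℕ) := by
    intro j
    by_cases h : (j:ℕ) < s.card
    · rw [hg]; simp only [dif_pos h, hF]; ring
    · rw [hg]; simp [dif_neg h]
  have h2 : ∑ i, F i = ∑ j : Fin k, g (j : ℕ) := by
    calc ∑ i, F i
        = ∑ i ∈ s, F i := by
          refine (Finset.sum_subset (Finset.subset_univ s) fun i _ hi => ?_).symm
          rw [hs] at hi
          simp only [Finset.mem_filter, Finset.mem_univ, true_and, not_not] at hi
          rw [hF]; simp [hi]
      _ = ∑ x : s, F x := (Finset.sum_coe_sort s F).symm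
      _ = ∑ j : Fin s.card, F (e j) := (Equiv.sum_comp e.toEquiv (fun x : s => F x)).symm
      _ = ∑ m ∈ Finset.range s.card, g m := by
          rw [← Fin.sum_univ_eq_sum_range]
          refine Finset.sum_congr rfl fun j _ => ?_
          simp only [hg, Fin.eta, dif_pos j.isLt]
      _ = ∑ m ∈ Finset.range k, g m :=
          Finset.sum_subset (Finset.range_subset_range.mpr hsk)
            (fun m _ hm => by rw [hg]; exact dif_neg (by simpa using hm))
      _ = ∑ j : Fin k, g (j : ℕ) := (Fin.sum_univ_eq_sum_range g k).symm
  rw [h2]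
  exact Finset.sum_congr rfl fun j _ => (h1 j).symm

lemma eval_aeval' {σ τ : Type*} (x : τ → ℂ) (g : σ → MvPolynomial τ ℂ)
    (P : MvPolynomial σ ℂ) :
    eval x (aeval g P) = eval (fun i => eval x (g i)) P := by
  induction P using MvPolynomial.induction_on with
  | C a => simp
  | add p q hp hq => simp only [map_add, hp, hq]
  | mul_X p i h => simp only [map_mul, aeval_X, eval_X, h]

end Stmt8Aux

/-- The ideal of polynomials on complex symmetric matrices vanishing on
matrices of rank `< k` is prime. -/
theorem stmt8 (n k : ℕ) (hk : 1 ≤ k) : (vanishingIdealRankLT n k).IsPrime := by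
  classical
  set σ := (Fin (k - 1) × Option (Fin n))
  let pm : {p : Fin n × Fin n // p.1 ≤ p.2} → MvPolynomial σ ℂ :=
    fun v => ∑ i : Fin (k - 1), X (i, none) * (X (i, some v.1.1) * X (i, some v.1.2))
  let ψ : MvPolynomial {p : Fin n × Fin n // p.1 ≤ p.2} ℂ →ₐ[ℂ] MvPolynomial σ ℂ := aeval pm
  have hker : vanishingIdealRankLT n k = RingHom.ker ψ.toRingHom := by
    ext P
    constructor
    · intro hP
      rw [RingHom.mem_ker]
      apply MvPolynomial.funext
      intro x
      rw [map_zero]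
      set u : Fin (k - 1) → Fin n → ℂ := fun i p => x (i, some p) with hu
      set A : Matrix (Fin n) (Fin n) ℂ :=
        ∑ i : Fin (k - 1), Matrix.vecMulVec (x (i, none) • u i) (u i) with hAdef
      have hAentry : ∀ p q, A p q = ∑ i : Fin (k - 1), x (i, none) * (u i p * u i q) := by
        intro p q
        rw [hAdef]
        rw [Matrix.sum_apply]
        exact Finset.sum_congr rfl fun i _ => by
          simp [Matrix.vecMulVec_apply, smul_eq_mul]; ring
      have hsymm : A.IsSymm := by
        ext p q
        rw [Matrix.transpose_apply, hAentry, hAentry]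
        exact Finset.sum_congr rfl fun i _ => by ring
      have hrank : A.rank < k := by
        have h1 : A.rank ≤ ∑ _i : Fin (k - 1), 1 := by
          refine (Stmt8Aux.rank_sum_le _ _).trans ?_
          exact Finset.sum_le_sum fun i _ => Stmt8Aux.rank_vecMulVec_le _ _
        simp only [Finset.sum_const, Finset.card_univ, Fintype.card_fin, smul_eq_mul,
          mul_one] at h1
        exact lt_of_le_of_lt h1 (Nat.sub_lt (lt_of_lt_of_le one_pos hk) one_pos)
      have heval : eval x (ψ P) = eval (fun v => A v.1.1 v.1.2) P := by
        show eval x (aeval pm P) = _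
        rw [Stmt8Aux.eval_aeval']
        have hfun : (fun v : {p : Fin n × Fin n // p.1 ≤ p.2} => eval x (pm v))
            = fun v => A v.1.1 v.1.2 := by
          funext v
          rw [hAentry]
          simp [pm, hu]
        rw [hfun]
      show eval x (aeval pm P) = 0
      rw [heval]
      exact hP A hsymm hrank
    · intro hP A hA hr
      rw [RingHom.mem_ker] at hP
      obtain ⟨lam, a, hdec⟩ := Stmt8Aux.decomp (k - 1) A hA (Nat.le_sub_one_of_lt hr)
      set x : σ → ℂ := fun s => Option.elim s.2 (lam s.1) (fun p => a s.1 p) with hx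
      have heval : eval x (ψ P) = eval (fun v => A v.1.1 v.1.2) P := by
        show eval x (aeval pm P) = _
        rw [Stmt8Aux.eval_aeval']
        have hfun : (fun v : {p : Fin n × Fin n // p.1 ≤ p.2} => eval x (pm v))
            = fun v => A v.1.1 v.1.2 := by
          funext v
          rw [hdec]
          simp only [pm, map_sum, map_mul, eval_X, hx]
          exact Finset.sum_congr rfl fun i _ => by simp [Option.elim]; ring
        rw [hfun]
      show _ = (0 : ℂ)
      rw [← heval]
      have : ψ P = 0 := hP
      rw [this, map_zero]
  rw [hker]
  exact RingHom.ker_isPrime _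
end

section
/- Let S be a real symmetric positive semidefinite n×n matrix. Then S can be written as Σ_{i=1}^{n} λ_i e_i e_iᵀ where e_1,…,e_n is an orthonormal basis of ℝⁿ and λ_i ≥ 0; moreover for any polynomial P on symmetric matrices that is homogeneous of degree k and vanishes on matrices of rank less than k, P(S) = Σ_{|α|=k, α⊆{1..n}} (multinomial-weighted) values of P on the rank-k matrices Σ_{i∈α} e_i e_iᵀ times ∏_{i∈α} λ_i; in particular, if P is nonnegative on all matrices of the form Σ_{i=1}^{k} v_i v_iᵀ with v_i ∈ ℝⁿ, then P(S) ≥ 0. -/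
open Finset MvPolynomial

lemma aux_rank_vecMulVec_le {m : ℕ} (w v : Fin m → ℝ) : (Matrix.vecMulVec w v).rank ≤ 1 := by
  rw [Matrix.vecMulVec_eq (Fin 1)]
  exact le_trans (Matrix.rank_mul_le_left _ _)
    (by have h := Matrix.rank_le_card_width (Matrix.replicateCol (Fin 1) w); simp at h; exact h)

lemma aux_rank_add_le {m : ℕ} (A B : Matrix (Fin m) (Fin m) ℝ) :
    (A + B).rank ≤ A.rank + B.rank := by
  have h : LinearMap.range (A + B).mulVecLin ≤
      LinearMap.range A.mulVecLin ⊔ LinearMap.range B.mulVecLin := by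
    rintro _ ⟨y, rfl⟩
    rw [Matrix.mulVecLin_add]
    exact Submodule.add_mem_sup (LinearMap.mem_range_self _ y) (LinearMap.mem_range_self _ y)
  calc (A + B).rank ≤ Module.finrank ℝ
        (LinearMap.range A.mulVecLin ⊔ LinearMap.range B.mulVecLin : Submodule ℝ (Fin m → ℝ)) :=
        Submodule.finrank_mono h
    _ ≤ A.rank + B.rank := Submodule.finrank_add_le_finrank_add_finrank _ _

lemma aux_rank_sum {ι : Type*} {m : ℕ} (s : Finset ι) (f : ι → Matrix (Fin m) (Fin m) ℝ)
    (h : ∀ i ∈ s, (f i).rank ≤ 1) : (∑ i ∈ s, f i).rank ≤ s.card := by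
  classical
  induction s using Finset.induction with
  | empty => simp [Matrix.rank_zero]
  | @insert a s' hx ih =>
    rw [Finset.sum_insert hx, Finset.card_insert_of_notMem hx]
    calc (f a + ∑ i ∈ s', f i).rank ≤ (f a).rank + (∑ i ∈ s', f i).rank := aux_rank_add_le _ _
      _ ≤ 1 + s'.card := add_le_add (h a (Finset.mem_insert_self _ _))
          (ih fun i hi => h i (Finset.mem_insert_of_mem hi))
      _ = s'.card + 1 := by omega

lemma aux_symm_sum {ι : Type*} {m : ℕ} (s : Finset ι) (c : ι → ℝ) (v : ι → Fin m → ℝ) :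
    (∑ i ∈ s, c i • Matrix.vecMulVec (v i) (v i)).IsSymm := by
  unfold Matrix.IsSymm
  rw [Matrix.transpose_sum]
  refine Finset.sum_congr rfl fun i _ => ?_
  rw [Matrix.transpose_smul]
  congr 1
  ext p q
  simp [Matrix.vecMulVec_apply, mul_comm]

lemma aux_rank_sum_smul {ι : Type*} {m : ℕ} (s : Finset ι) (c : ι → ℝ) (v : ι → Fin m → ℝ) :
    (∑ i ∈ s, c i • Matrix.vecMulVec (v i) (v i)).rank ≤ s.card := by
  apply aux_rank_sum
  intro i _
  have : c i • Matrix.vecMulVec (v i) (v i) = Matrix.vecMulVec (c i • v i) (v i) := by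
    ext p q; simp [Matrix.vecMulVec_apply, mul_assoc]
  rw [this]
  exact aux_rank_vecMulVec_le _ _

open Finset MvPolynomial

lemma aux_aeval_eq_eval {n : ℕ} (x : Fin n → ℝ) (p : MvPolynomial (Fin n) ℝ) :
    aeval x p = eval x p := by
  rw [aeval_eq_eval₂Hom, Algebra.algebraMap_self]
  rfl

lemma aux_eval_bind₁ {σ τ : Type*} (x : τ → ℝ) (g : σ → MvPolynomial τ ℝ)
    (p : MvPolynomial σ ℝ) :
    eval x (bind₁ g p) = eval (fun i => eval x (g i)) p :=
  eval₂Hom_bind₁ (RingHom.id ℝ) x g p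

lemma aux_bind1_indicator_eq_zero {n : ℕ} (R : MvPolynomial (Fin n) ℝ) (T : Finset (Fin n))
    (hvan : ∀ x : Fin n → ℝ, (∀ i ∉ T, x i = 0) → eval x R = 0) :
    bind₁ (fun i => if i ∈ T then (X i : MvPolynomial (Fin n) ℝ) else 0) R = 0 := by
  apply MvPolynomial.funext
  intro x
  rw [aux_eval_bind₁, map_zero]
  have : (fun i => eval x (if i ∈ T then (X i : MvPolynomial (Fin n) ℝ) else 0)) =
      fun i => if i ∈ T then x i else 0 := by
    funext i; split <;> simp
  rw [this]
  exact hvan _ (fun i hi => by simp [hi])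

lemma aux_coeff_bind1_indicator {n : ℕ} (R : MvPolynomial (Fin n) ℝ) (T : Finset (Fin n))
    (d : Fin n →₀ ℕ) (hd : d.support ⊆ T) :
    coeff d (bind₁ (fun i => if i ∈ T then (X i : MvPolynomial (Fin n) ℝ) else 0) R)
      = coeff d R := by
  classical
  conv_lhs => rw [R.as_sum]
  rw [map_sum]
  have hterm : ∀ d' : Fin n →₀ ℕ,
      bind₁ (fun i => if i ∈ T then (X i : MvPolynomial (Fin n) ℝ) else 0)
        (monomial d' (coeff d' R)) =
      if d'.support ⊆ T then monomial d' (coeff d' R) else 0 := by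
    intro d'
    rw [bind₁_monomial]
    by_cases h : d'.support ⊆ T
    · rw [if_pos h]
      have : ∀ i ∈ d'.support,
          (if i ∈ T then (X i : MvPolynomial (Fin n) ℝ) else 0) ^ d' i = X i ^ d' i := by
        intro i hi; rw [if_pos (h hi)]
      rw [Finset.prod_congr rfl this, monomial_eq, Finsupp.prod]
    · rw [if_neg h]
      obtain ⟨i, hi, hiT⟩ := Finset.not_subset.mp h
      rw [Finset.prod_eq_zero hi, mul_zero]
      rw [if_neg hiT]
      exact zero_pow (Finsupp.mem_support_iff.mp hi)
  rw [MvPolynomial.coeff_sum]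
  simp_rw [hterm, apply_ite (coeff d), coeff_monomial, coeff_zero]
  by_cases hmem : d ∈ R.support
  · rw [Finset.sum_eq_single_of_mem d hmem]
    · simp [hd]
    · intro b _ hbd
      simp [hbd]
  · rw [MvPolynomial.notMem_support_iff.mp hmem]
    apply Finset.sum_eq_zero
    intro b hb
    by_cases hbd : b = d
    · exact absurd (hbd ▸ hb) hmem
    · simp [hbd]

lemma aux_coeff_small_support {n k : ℕ} (R : MvPolynomial (Fin n) ℝ)
    (hvan : ∀ x : Fin n → ℝ, (Finset.univ.filter fun i => x i ≠ 0).card < k → eval x R = 0)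
    (d : Fin n →₀ ℕ) (hd : d.support.card < k) : coeff d R = 0 := by
  classical
  have h0 : bind₁ (fun i => if i ∈ d.support then (X i : MvPolynomial (Fin n) ℝ) else 0) R = 0 := by
    apply aux_bind1_indicator_eq_zero
    intro x hx
    apply hvan
    calc (Finset.univ.filter fun i => x i ≠ 0).card ≤ d.support.card := by
          apply Finset.card_le_card
          intro i hi
          rw [Finset.mem_filter] at hi
          by_contra hmem
          exact hi.2 (hx i hmem)
      _ < k := hd
  rw [← aux_coeff_bind1_indicator R d.support d subset_rfl, h0, coeff_zero]

lemma aux_core {n k : ℕ} (R : MvPolynomial (Fin n) ℝ) (hR : R.IsHomogeneous k)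
    (hvan : ∀ x : Fin n → ℝ, (Finset.univ.filter fun i => x i ≠ 0).card < k → eval x R = 0)
    (x : Fin n → ℝ) :
    eval x R = ∑ T ∈ Finset.univ.powersetCard k,
      (∏ i ∈ T, x i) * eval (fun i => if i ∈ T then (1:ℝ) else 0) R := by
  classical
  -- structure of supports
  have key : ∀ d ∈ R.support, d.support.card = k ∧ ∀ i ∈ d.support, d i = 1 := by
    intro d hd
    have hcoeff : coeff d R ≠ 0 := MvPolynomial.mem_support_iff.mp hd
    have hdeg : d.degree = k := by
      by_contra h
      exact hcoeff (hR.coeff_eq_zero h)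
    have hcard_le : d.support.card ≤ k := by
      rw [← hdeg]
      unfold Finsupp.degree
      calc d.support.card = ∑ i ∈ d.support, 1 := by rw [Finset.card_eq_sum_ones]
        _ ≤ ∑ i ∈ d.support, d i := Finset.sum_le_sum fun i hi =>
            Nat.one_le_iff_ne_zero.mpr (Finsupp.mem_support_iff.mp hi)
    have hcard_ge : ¬ d.support.card < k := fun h =>
      hcoeff (aux_coeff_small_support R hvan d h)
    have hcard : d.support.card = k := le_antisymm hcard_le (not_lt.mp hcard_ge)
    refine ⟨hcard, fun i hi => ?_⟩
    by_contra hne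
    have hi0 : d i ≠ 0 := Finsupp.mem_support_iff.mp hi
    have h2 : 2 ≤ d i := by omega
    have hsplit : ∑ j ∈ d.support, d j = (∑ j ∈ d.support.erase i, d j) + d i :=
      (Finset.sum_erase_add _ _ hi).symm
    have hb : (d.support.erase i).card ≤ ∑ j ∈ d.support.erase i, d j := by
      rw [Finset.card_eq_sum_ones]
      exact Finset.sum_le_sum fun j hj => Nat.one_le_iff_ne_zero.mpr
        (Finsupp.mem_support_iff.mp (Finset.mem_of_mem_erase hj))
    have hce : (d.support.erase i).card = d.support.card - 1 := Finset.card_erase_of_mem hi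
    have hc1 : 1 ≤ d.support.card := Finset.card_pos.mpr ⟨i, hi⟩
    have hdeg' : d.degree = ∑ j ∈ d.support, d j := rfl
    omega
  -- eval as sum over support, exponents all 1
  have heval : ∀ y : Fin n → ℝ,
      eval y R = ∑ d ∈ R.support, coeff d R * ∏ i ∈ d.support, y i := by
    intro y
    rw [MvPolynomial.eval_eq]
    refine Finset.sum_congr rfl fun d hd => ?_
    congr 1
    refine Finset.prod_congr rfl fun i hi => ?_
    rw [(key d hd).2 i hi, pow_one]
  -- eval at indicator
  have hind : ∀ T : Finset (Fin n),
      eval (fun i => if i ∈ T then (1:ℝ) else 0) R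
        = ∑ d ∈ R.support, coeff d R * (if d.support ⊆ T then 1 else 0) := by
    intro T
    rw [heval]
    refine Finset.sum_congr rfl fun d hd => ?_
    congr 1
    by_cases h : d.support ⊆ T
    · rw [if_pos h]
      apply Finset.prod_eq_one
      intro i hi
      rw [if_pos (h hi)]
    · rw [if_neg h]
      obtain ⟨i, hi, hiT⟩ := Finset.not_subset.mp h
      exact Finset.prod_eq_zero hi (if_neg hiT)
  calc eval x R = ∑ d ∈ R.support, coeff d R * ∏ i ∈ d.support, x i := heval x
    _ = ∑ d ∈ R.support, (∑ T ∈ Finset.univ.powersetCard k,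
          (∏ i ∈ T, x i) * (coeff d R * (if d.support ⊆ T then 1 else 0))) := by
        refine Finset.sum_congr rfl fun d hd => ?_
        rw [Finset.sum_eq_single_of_mem d.support]
        · simp [mul_comm]
        · exact Finset.mem_powersetCard.mpr ⟨Finset.subset_univ _, (key d hd).1⟩
        · intro T hT hTd
          rw [Finset.mem_powersetCard] at hT
          have : ¬ d.support ⊆ T := by
            intro hsub
            exact hTd (Finset.eq_of_subset_of_card_le hsub (by rw [hT.2, (key d hd).1])).symm
          simp [this]
    _ = ∑ T ∈ Finset.univ.powersetCard k,
          (∏ i ∈ T, x i) * eval (fun i => if i ∈ T then (1:ℝ) else 0) R := by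
        rw [Finset.sum_comm]
        refine Finset.sum_congr rfl fun T hT => ?_
        rw [hind T, Finset.mul_sum]

lemma aux_card_fiber {n k : ℕ} (T : Finset (Fin n)) (hT : T.card = k) :
    ((Finset.univ.filter (fun α : Fin k → Fin n => Function.Injective α)).filter
      (fun α => Finset.univ.image α = T)).card = Nat.factorial k := by
  classical
  rw [Finset.filter_filter]
  rw [← Fintype.card_subtype]
  have E : {α : Fin k → Fin n // Function.Injective α ∧ Finset.univ.image α = T} ≃
      (Fin k ≃ T) := by
    refine
      { toFun := fun a => Equiv.ofBijective
          (fun i => (⟨a.1 i, by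
            have := Finset.mem_image_of_mem a.1 (Finset.mem_univ i)
            rwa [a.2.2] at this⟩ : T))
          ⟨fun i j hij => a.2.1 (congrArg Subtype.val hij), ?_⟩
        invFun := fun f => ⟨fun i => (f i : Fin n), ?_, ?_⟩
        left_inv := ?_
        right_inv := ?_ }
    · rintro ⟨t, ht⟩
      rw [← a.2.2] at ht
      obtain ⟨i, -, rfl⟩ := Finset.mem_image.mp ht
      exact ⟨i, rfl⟩
    · intro i j hij
      exact f.injective (Subtype.ext hij)
    · ext j
      simp only [Finset.mem_image, Finset.mem_univ, true_and]
      constructor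
      · rintro ⟨i, rfl⟩; exact (f i).2
      · intro hj; exact ⟨f.symm ⟨j, hj⟩, by simp⟩
    · rintro ⟨α, hα⟩; rfl
    · intro f
      ext i
      rfl
  rw [Fintype.card_congr E, Fintype.card_equiv ((T.equivFinOfCardEq hT).symm)]
  simp



/-- A real positive semidefinite matrix `S` has a spectral decomposition
`S = Σ λ_i e_i e_iᵀ` with orthonormal `e_i` and `λ_i ≥ 0`; moreover, for a
polynomial `P` on matrices, homogeneous of degree `k` and vanishing on symmetric
matrices of rank `< k`, `P(S)` expands as the multinomial-weighted sum of values
of `P` on the rank-`k` matrices built from the eigenvectors; in particular, if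
`P` is nonnegative on all sums `Σ_{i=1}^k v_i v_iᵀ`, then `P(S) ≥ 0`. -/
theorem stmt12 (n k : ℕ) (S : Matrix (Fin n) (Fin n) ℝ) (hS : S.PosSemidef)
    (P : Matrix (Fin n) (Fin n) ℝ → ℝ)
    (hpoly : ∃ Q : MvPolynomial (Fin n × Fin n) ℝ, Q.IsHomogeneous k ∧
      ∀ A : Matrix (Fin n) (Fin n) ℝ, P A = MvPolynomial.eval (fun p => A p.1 p.2) Q)
    (hvan : ∀ A : Matrix (Fin n) (Fin n) ℝ, A.IsSymm → A.rank < k → P A = 0) :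
    ∃ (lam : Fin n → ℝ) (e : Fin n → (Fin n → ℝ)),
      (∀ i, 0 ≤ lam i) ∧
      (∀ i, ∑ p : Fin n, e i p * e i p = 1) ∧
      (∀ i j, i ≠ j → ∑ p : Fin n, e i p * e j p = 0) ∧
      S = ∑ i : Fin n, lam i • Matrix.vecMulVec (e i) (e i) ∧
      P S = (1 / (Nat.factorial k : ℝ)) *
        ∑ α : Fin k → Fin n, (∏ i : Fin k, lam (α i)) *
          P (∑ i : Fin k, Matrix.vecMulVec (e (α i)) (e (α i))) ∧
      ((∀ v : Fin k → (Fin n → ℝ), 0 ≤ P (∑ i : Fin k, Matrix.vecMulVec (v i) (v i))) →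
        0 ≤ P S) := by
  classical
  obtain ⟨Q, hQhom, hQeval⟩ := hpoly
  have hH : S.IsHermitian := hS.isHermitian
  set lam : Fin n → ℝ := hH.eigenvalues with hlam
  set e : Fin n → Fin n → ℝ := fun i => ⇑(hH.eigenvectorBasis i) with he
  have hnonneg : ∀ i, 0 ≤ lam i := fun i => hS.eigenvalues_nonneg i
  have horth : ∀ i j, (∑ p, e i p * e j p) = if i = j then 1 else 0 := by
    intro i j
    have h := (orthonormal_iff_ite.mp hH.eigenvectorBasis.orthonormal) i j
    simpa [PiLp.inner_apply, RCLike.inner_apply, starRingEnd_apply, he, mul_comm] using h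
  set M : Fin n → Matrix (Fin n) (Fin n) ℝ := fun i => Matrix.vecMulVec (e i) (e i) with hM
  have hdecomp : S = ∑ i, lam i • M i := by
    ext p q
    conv_lhs => rw [hH.spectral_theorem]
    simp only [Unitary.conjStarAlgAut_apply, Matrix.mul_apply, Matrix.diagonal_apply, Matrix.star_apply, star_trivial,
      Function.comp_apply, RCLike.ofReal_real_eq_id, id_eq, mul_ite, mul_zero,
      Finset.sum_ite_eq, Finset.sum_ite_eq', Finset.mem_univ, if_true,
      Matrix.sum_apply, Matrix.smul_apply, smul_eq_mul, Matrix.vecMulVec_apply, hM,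
      Matrix.IsHermitian.eigenvectorUnitary_apply]
    refine Finset.sum_congr rfl fun i _ => by ring
  set R : MvPolynomial (Fin n) ℝ :=
    MvPolynomial.bind₁ (fun p : Fin n × Fin n =>
      ∑ i : Fin n, (MvPolynomial.C (M i p.1 p.2) * MvPolynomial.X i)) Q with hRdef
  have hReval : ∀ x : Fin n → ℝ, MvPolynomial.eval x R = P (∑ i, x i • M i) := by
    intro x
    rw [hRdef, aux_eval_bind₁, hQeval]
    refine congrArg (fun f => MvPolynomial.eval f Q) (funext fun p => ?_)
    simp only [map_sum, map_mul, MvPolynomial.eval_C, MvPolynomial.eval_X,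
      Matrix.sum_apply, Matrix.smul_apply, smul_eq_mul]
    exact Finset.sum_congr rfl fun i _ => mul_comm _ _
  have hRhom : R.IsHomogeneous k := by
    have hg : ∀ p : Fin n × Fin n,
        (∑ i : Fin n, (MvPolynomial.C (M i p.1 p.2) * MvPolynomial.X i)).IsHomogeneous 1 := by
      intro p
      apply MvPolynomial.IsHomogeneous.sum
      intro i _
      simpa using MvPolynomial.isHomogeneous_C_mul_X_pow (M i p.1 p.2) i 1
    have h2 := hQhom.aeval _ hg
    rw [one_mul] at h2
    rw [hRdef]
    exact h2
  have hRvan : ∀ x : Fin n → ℝ,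
      (Finset.univ.filter fun i => x i ≠ 0).card < k → MvPolynomial.eval x R = 0 := by
    intro x hx
    rw [hReval]
    have hsum : ∑ i, x i • M i = ∑ i ∈ Finset.univ.filter (fun i => x i ≠ 0), x i • M i := by
      refine (Finset.sum_subset (Finset.filter_subset _ _) fun i _ hi => ?_).symm
      have : x i = 0 := by
        by_contra h
        exact hi (Finset.mem_filter.mpr ⟨Finset.mem_univ i, h⟩)
      simp [this]
    rw [hsum]
    exact hvan _ (aux_symm_sum _ _ _) (lt_of_le_of_lt (aux_rank_sum_smul _ _ _) hx)
  have hindP : ∀ T : Finset (Fin n),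
      MvPolynomial.eval (fun i => if i ∈ T then (1:ℝ) else 0) R = P (∑ i ∈ T, M i) := by
    intro T
    rw [hReval]
    congr 1
    simp [ite_smul, Finset.sum_ite_mem]
  have hzero : ∀ α : Fin k → Fin n, ¬ Function.Injective α →
      P (∑ i : Fin k, M (α i)) = 0 := by
    intro α hα
    have hsymm : (∑ i : Fin k, M (α i)).IsSymm := by
      have := aux_symm_sum Finset.univ (fun _ : Fin k => (1:ℝ)) (fun i => e (α i))
      simpa [hM] using this
    apply hvan _ hsymm
    have himg : (Finset.univ.image α).card < k := by
      have hle : (Finset.univ.image α).card ≤ k := le_trans Finset.card_image_le (by simp)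
      rcases lt_or_eq_of_le hle with h | h
      · exact h
      · exfalso
        apply hα
        have : (Finset.univ.image α).card = (Finset.univ : Finset (Fin k)).card := by simp [h]
        have hinj := Finset.injOn_of_card_image_eq this
        intro a b hab
        exact hinj (by simp) (by simp) hab
    have hsum : ∑ i : Fin k, M (α i) = ∑ j ∈ Finset.univ.image α,
        (((Finset.univ.filter fun i => α i = j).card : ℝ)) • M j := by
      rw [Finset.sum_comp]
      exact Finset.sum_congr rfl fun j _ => (Nat.cast_smul_eq_nsmul ℝ _ _).symm
    rw [hsum]
    exact lt_of_le_of_lt (aux_rank_sum_smul _ _ _) himg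
  set F : (Fin k → Fin n) → ℝ := fun α =>
    (∏ i : Fin k, lam (α i)) * P (∑ i : Fin k, M (α i)) with hF
  set G : Finset (Fin n) → ℝ := fun T => (∏ i ∈ T, lam i) * P (∑ i ∈ T, M i) with hG
  have hsplit : ∑ α : Fin k → Fin n, F α
      = ∑ α ∈ Finset.univ.filter (fun α : Fin k → Fin n => Function.Injective α), F α := by
    have h0 : ∑ α ∈ Finset.univ.filter (fun α : Fin k → Fin n => ¬ Function.Injective α),
        F α = 0 := by
      refine Finset.sum_eq_zero fun α hα => ?_
      simp only [hF, hzero α (Finset.mem_filter.mp hα).2, mul_zero]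
    rw [← Finset.sum_filter_add_sum_filter_not Finset.univ
      (fun α : Fin k → Fin n => Function.Injective α) F, h0, add_zero]
  have hfiber : ∑ α ∈ Finset.univ.filter (fun α : Fin k → Fin n => Function.Injective α), F α
      = ∑ T ∈ Finset.univ.powersetCard k, (Nat.factorial k : ℝ) * G T := by
    rw [← Finset.sum_fiberwise_of_maps_to (g := fun α : Fin k → Fin n => Finset.univ.image α)
      (t := Finset.univ.powersetCard k) ?_ F]
    · refine Finset.sum_congr rfl fun T hT => ?_
      have hTcard : T.card = k := (Finset.mem_powersetCard.mp hT).2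
      have hstep : ∀ α ∈ (Finset.univ.filter
            (fun α : Fin k → Fin n => Function.Injective α)).filter
            (fun α => Finset.univ.image α = T), F α = G T := by
        intro α hα
        rw [Finset.mem_filter] at hα
        obtain ⟨hα1, hα2⟩ := hα
        have hinj : Function.Injective α := (Finset.mem_filter.mp hα1).2
        have hprod : ∏ i : Fin k, lam (α i) = ∏ j ∈ T, lam j := by
          rw [← hα2, Finset.prod_image fun a _ b _ hab => hinj hab]
        have hsum2 : ∑ i : Fin k, M (α i) = ∑ j ∈ T, M j := by
          rw [← hα2, Finset.sum_image fun a _ b _ hab => hinj hab]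
        simp only [hF, hG]
        rw [hprod, hsum2]
      rw [Finset.sum_congr rfl hstep, Finset.sum_const, aux_card_fiber T hTcard,
        nsmul_eq_mul]
    · intro α hα
      have hinj : Function.Injective α := (Finset.mem_filter.mp hα).2
      refine Finset.mem_powersetCard.mpr ⟨Finset.subset_univ _, ?_⟩
      rw [Finset.card_image_of_injective _ hinj]
      simp
  have hPS : P S = ∑ T ∈ Finset.univ.powersetCard k, G T := by
    have h1 : P S = MvPolynomial.eval lam R := by rw [hReval, ← hdecomp]
    rw [h1, aux_core R hRhom hRvan lam]
    exact Finset.sum_congr rfl fun T _ => by rw [hG, hindP T]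
  have hmain : P S = (1 / (Nat.factorial k : ℝ)) * ∑ α : Fin k → Fin n, F α := by
    rw [hsplit, hfiber, ← Finset.mul_sum, hPS]
    rw [← mul_assoc, one_div_mul_cancel (by positivity : (Nat.factorial k : ℝ) ≠ 0), one_mul]
  refine ⟨lam, e, hnonneg, fun i => by simpa using horth i i,
    fun i j hij => by simpa [hij] using horth i j, hdecomp, hmain, ?_⟩
  intro hpos
  rw [hmain]
  apply mul_nonneg (by positivity)
  apply Finset.sum_nonneg
  intro α _
  apply mul_nonneg (Finset.prod_nonneg fun i _ => hnonneg (α i))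
  exact hpos fun i => e (α i)
end

section
/- Let E ⊆ ℝⁿ be a k-dimensional linear subspace with orthogonal complement E^⊥, and let μ be a Radon measure on ℝⁿ that is invariant under translations by vectors in E^⊥, i.e., μ(B + x) = μ(B) for all Borel sets B and x ∈ E^⊥. Then the pushforward of μ restricted by any compactly supported continuous function φ ∘ π_E (where π_E is orthogonal projection onto E) along the orthogonal projection π_{E^⊥} is a scalar multiple of Lebesgue measure on E^⊥. -/
open MeasureTheory Module
open scoped ENNReal NNReal

/-- If a Radon measure `μ` on `ℝⁿ` is invariant under translations by `E^⊥`
(`E` a `k`-dimensional subspace), then for every compactly supported continuous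
`φ`, the pushforward along `π_{E^⊥}` of `μ` weighted by `φ ∘ π_E` is a scalar
multiple of Lebesgue measure (the `(n−k)`-dimensional Hausdorff measure) on `E^⊥`. -/
theorem stmt13 (n k : ℕ) (E : Submodule ℝ (EuclideanSpace ℝ (Fin n)))
    (hE : Module.finrank ℝ E = k)
    (μ : Measure (EuclideanSpace ℝ (Fin n))) (hreg : μ.Regular)
    (hinv : ∀ x ∈ Eᗮ, ∀ B : Set (EuclideanSpace ℝ (Fin n)), MeasurableSet B →
      μ ((fun y => y + x) '' B) = μ B)
    (φ : EuclideanSpace ℝ (Fin n) → ℝ) (hφ : Continuous φ) (hφc : HasCompactSupport φ) :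
    ∃ c : ℝ, ∀ B : Set (EuclideanSpace ℝ (Fin n)), MeasurableSet B → Bornology.IsBounded B →
      ∫ x in (fun x => ((Submodule.orthogonalProjectionOnto Eᗮ x : EuclideanSpace ℝ (Fin n)))) ⁻¹' B,
          φ ((Submodule.orthogonalProjectionOnto E x : EuclideanSpace ℝ (Fin n))) ∂μ =
        c * (((μH[(n : ℝ) - k]).restrict (Eᗮ : Set (EuclideanSpace ℝ (Fin n)))) B).toReal := by
  classical
  haveI : IsFiniteMeasureOnCompacts μ := hreg.toIsFiniteMeasureOnCompacts
  have hkn : k ≤ n := by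
    have h := Submodule.finrank_le E
    rwa [hE, finrank_euclideanSpace_fin] at h
  have hrank : finrank ℝ ↥Eᗮ = n - k := by
    have h := Submodule.finrank_add_finrank_orthogonal (K := E)
    rw [hE, finrank_euclideanSpace_fin] at h
    omega
  set d : ℝ := (n : ℝ) - k with hdd
  have hd0 : 0 ≤ d := by
    rw [hdd, sub_nonneg]
    exact_mod_cast hkn
  have hd' : d = ((finrank ℝ ↥Eᗮ : ℕ) : ℝ) := by
    rw [hrank, hdd, Nat.cast_sub hkn]
  haveI hHaar : Measure.IsAddHaarMeasure (μH[d] : Measure ↥Eᗮ) := by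
    rw [hd']; infer_instance
  -- boundedness ⇒ finite Hausdorff measure on the subspace
  have hfin : ∀ B' : Set ↥Eᗮ, Bornology.IsBounded B' → (μH[d] : Measure ↥Eᗮ) B' ≠ ∞ := by
    intro B' hB'
    have hK : IsCompact (closure B') := hB'.isCompact_closure
    exact ((measure_mono subset_closure).trans_lt hK.measure_lt_top).ne
  -- projections
  set p : EuclideanSpace ℝ (Fin n) → ↥Eᗮ := fun x => Submodule.orthogonalProjectionOnto Eᗮ x with hp
  have hp_cont : Continuous p := (Submodule.orthogonalProjectionOnto Eᗮ).continuous
  have hp_meas : Measurable p := hp_cont.measurable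
  set q : EuclideanSpace ℝ (Fin n) → EuclideanSpace ℝ (Fin n) :=
    fun x => (Submodule.orthogonalProjectionOnto E x : EuclideanSpace ℝ (Fin n)) with hq
  have hq_cont : Continuous q := continuous_subtype_val.comp (Submodule.orthogonalProjectionOnto E).continuous
  have hq_add : ∀ v ∈ Eᗮ, ∀ x, q (x + v) = q x := by
    intro v hv x
    simp only [hq, map_add, Submodule.orthogonalProjectionOnto_apply_of_mem_orthogonal hv,
      add_zero]
  have hp_add : ∀ (v : ↥Eᗮ) (x : EuclideanSpace ℝ (Fin n)),
      p (x + (v : EuclideanSpace ℝ (Fin n))) = p x + v := by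
    intro v x
    simp only [hp, map_add, Submodule.orthogonalProjectionOnto_mem_subspace_eq_self]
  have hdecomp : ∀ x, q x + ((p x : EuclideanSpace ℝ (Fin n))) = x := fun x =>
    E.starProjection_add_starProjection_orthogonal x
  -- invariance of μ under translations by Eᗮ, in pushforward form
  have hmap : ∀ v ∈ Eᗮ, Measure.map (fun y => y + v) μ = μ := by
    intro v hv
    ext A hA
    rw [Measure.map_apply (measurable_add_const v) hA]
    have hA' : (fun y => y + v) ⁻¹' A = (fun y => y + -v) '' A := by
      rw [Set.image_add_right, neg_neg]
    rw [hA']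
    exact hinv (-v) (neg_mem hv) A hA
  -- the main step: for every nonnegative weight coming from a compactly supported
  -- continuous function, the projected measure is a multiple of Hausdorff measure.
  have main : ∀ ψ : EuclideanSpace ℝ (Fin n) → ℝ, Continuous ψ → HasCompactSupport ψ →
      ∃ c : ℝ≥0, ∀ B' : Set ↥Eᗮ, MeasurableSet B' → Bornology.IsBounded B' →
        ∫⁻ x in p ⁻¹' B', ENNReal.ofReal (ψ (q x)) ∂μ = c * (μH[d] : Measure ↥Eᗮ) B' := by
    intro ψ hψ hψc
    obtain ⟨C, hC⟩ := hψc.exists_bound_of_continuous hψ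
    obtain ⟨R₀, hR₀⟩ : ∃ R₀, tsupport ψ ⊆ Metric.closedBall 0 R₀ :=
      hψc.isBounded.subset_closedBall 0
    set g : EuclideanSpace ℝ (Fin n) → ℝ≥0∞ := fun x => ENNReal.ofReal (ψ (q x)) with hg
    have hg_meas : Measurable g := by
      exact (ENNReal.continuous_ofReal.comp (hψ.comp hq_cont)).measurable
    set m : Measure (EuclideanSpace ℝ (Fin n)) := μ.withDensity g with hm
    set ν : Measure ↥Eᗮ := m.map p with hν
    -- tube estimate
    have tube : ∀ B' : Set ↥Eᗮ, MeasurableSet B' → Bornology.IsBounded B' →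
        ∫⁻ x in p ⁻¹' B', g x ∂μ ≠ ∞ := by
      intro B' hB'm hB'b
      obtain ⟨R₁, hR₁⟩ : ∃ R₁, B' ⊆ Metric.closedBall 0 R₁ := hB'b.subset_closedBall 0
      have hbound : ∀ x ∈ p ⁻¹' B',
          g x ≤ (Metric.closedBall (0 : EuclideanSpace ℝ (Fin n)) (R₀ + R₁)).indicator
            (fun _ => ENNReal.ofReal C) x := by
        intro x hx
        by_cases hgx : ψ (q x) ≤ 0
        · simp [hg, ENNReal.ofReal_eq_zero.2 hgx]
        · push_neg at hgx
          have hq_mem : q x ∈ tsupport ψ :=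
            subset_tsupport ψ (by simp [Function.mem_support]; exact ne_of_gt hgx)
          have h1 : ‖q x‖ ≤ R₀ := by
            have := hR₀ hq_mem
            simpa [Metric.mem_closedBall, dist_zero_right] using this
          have h2 : ‖(p x : EuclideanSpace ℝ (Fin n))‖ ≤ R₁ := by
            have := hR₁ hx
            simpa [Metric.mem_closedBall, dist_zero_right] using this
          have hxmem : x ∈ Metric.closedBall (0 : EuclideanSpace ℝ (Fin n)) (R₀ + R₁) := by
            rw [Metric.mem_closedBall, dist_zero_right, ← hdecomp x]
            exact (norm_add_le _ _).trans (add_le_add h1 h2)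
          rw [Set.indicator_of_mem hxmem]
          exact ENNReal.ofReal_le_ofReal ((le_abs_self _).trans (hC (q x)))
      have h1 : ∫⁻ x in p ⁻¹' B', g x ∂μ
          ≤ ∫⁻ x, (Metric.closedBall (0 : EuclideanSpace ℝ (Fin n)) (R₀ + R₁)).indicator
              (fun _ => ENNReal.ofReal C) x ∂μ := by
        rw [← lintegral_indicator (hp_meas hB'm)]
        apply lintegral_mono
        intro x
        by_cases hx : x ∈ p ⁻¹' B'
        · rw [Set.indicator_of_mem hx]; exact hbound x hx
        · simp [Set.indicator_of_notMem hx]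
      have h2 : ∫⁻ x, (Metric.closedBall (0 : EuclideanSpace ℝ (Fin n)) (R₀ + R₁)).indicator
            (fun _ => ENNReal.ofReal C) x ∂μ
          = ENNReal.ofReal C * μ (Metric.closedBall 0 (R₀ + R₁)) := by
        rw [lintegral_indicator Metric.isClosed_closedBall.measurableSet]
        simp [Measure.restrict_apply]
      refine (h1.trans_lt ?_).ne
      rw [h2]
      exact ENNReal.mul_lt_top ENNReal.ofReal_lt_top
        (isCompact_closedBall _ _).measure_lt_top
    -- instances for ν
    haveI hinv_ν : ν.IsAddLeftInvariant := by
      constructor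
      intro v
      have hginv : ∀ x, g (x + (v : EuclideanSpace ℝ (Fin n))) = g x := by
        intro x
        simp only [hg, hq_add (v : EuclideanSpace ℝ (Fin n)) v.2 x]
      have h1 : Measure.map (fun y => y + (v : EuclideanSpace ℝ (Fin n))) m = m := by
        ext A hA
        rw [Measure.map_apply (measurable_add_const _) hA, hm,
          withDensity_apply _ (hA.preimage (measurable_add_const _)),
          withDensity_apply _ hA]
        calc ∫⁻ x in (fun y => y + (v : EuclideanSpace ℝ (Fin n))) ⁻¹' A, g x ∂μ
            = ∫⁻ x in (fun y => y + (v : EuclideanSpace ℝ (Fin n))) ⁻¹' A,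
                g (x + (v : EuclideanSpace ℝ (Fin n))) ∂μ :=
              lintegral_congr fun x => (hginv x).symm
          _ = ∫⁻ y in A, g y ∂(Measure.map (fun y => y + (v : EuclideanSpace ℝ (Fin n))) μ) :=
              (setLIntegral_map hA hg_meas (measurable_add_const _)).symm
          _ = ∫⁻ y in A, g y ∂μ := by rw [hmap _ v.2]
      have hcomp : (fun y => v + y) ∘ p = p ∘ (fun x => x + (v : EuclideanSpace ℝ (Fin n))) := by
        funext x
        simp only [Function.comp_apply, hp_add v x, add_comm]
      rw [hν, Measure.map_map (measurable_const_add v) hp_meas, hcomp,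
        ← Measure.map_map hp_meas (measurable_add_const _), h1]
    haveI hfc_ν : IsFiniteMeasureOnCompacts ν := by
      constructor
      intro K hK
      have hKm : MeasurableSet K := hK.measurableSet
      rw [hν, Measure.map_apply hp_meas hKm, hm, withDensity_apply _ (hp_meas hKm)]
      exact lt_of_le_of_ne le_top (tube K hKm hK.isBounded)
    -- uniqueness of Haar measure
    have huniq : ν = ν.addHaarScalarFactor (μH[d] : Measure ↥Eᗮ) • (μH[d] : Measure ↥Eᗮ) :=
      Measure.isAddLeftInvariant_eq_smul ν _
    refine ⟨ν.addHaarScalarFactor (μH[d] : Measure ↥Eᗮ), ?_⟩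
    intro B' hB'm hB'b
    have : ν B' = (ν.addHaarScalarFactor (μH[d] : Measure ↥Eᗮ) : ℝ≥0∞)
        * (μH[d] : Measure ↥Eᗮ) B' := by
      conv_lhs => rw [huniq]
      rw [Measure.smul_apply, ENNReal.smul_def, smul_eq_mul]
    rw [← this, hν, Measure.map_apply hp_meas hB'm, hm, withDensity_apply _ (hp_meas hB'm)]
  -- apply the main step to φ, -φ and |φ|
  obtain ⟨c₁, hc₁⟩ := main φ hφ hφc
  obtain ⟨c₂, hc₂⟩ := main (-φ) hφ.neg (hφc.comp_left (g := Neg.neg) neg_zero)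
  obtain ⟨c₃, hc₃⟩ := main (fun x => |φ x|) hφ.abs hφc.abs
  refine ⟨(c₁ : ℝ) - c₂, ?_⟩
  intro B hB hBb
  set B' : Set ↥Eᗮ := Subtype.val ⁻¹' B with hB'
  have hB'm : MeasurableSet B' := hB.preimage measurable_subtype_coe
  have hB'b : Bornology.IsBounded B' := by
    obtain ⟨R, hR⟩ : ∃ R, B ⊆ Metric.closedBall 0 R := hBb.subset_closedBall 0
    apply Bornology.IsBounded.subset (Metric.isBounded_closedBall (x := (0 : ↥Eᗮ)) (r := R))
    intro b hb
    have := hR hb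
    simp only [Metric.mem_closedBall, dist_zero_right] at this ⊢
    exact this
  have hSet : (fun x => ((Submodule.orthogonalProjectionOnto Eᗮ x : EuclideanSpace ℝ (Fin n)))) ⁻¹' B
      = p ⁻¹' B' := rfl
  -- integrability
  have hint : Integrable (fun x => φ (q x)) (μ.restrict (p ⁻¹' B')) := by
    constructor
    · exact (hφ.comp hq_cont).aestronglyMeasurable
    · rw [hasFiniteIntegral_iff_norm]
      have : ∫⁻ x in p ⁻¹' B', ENNReal.ofReal ‖φ (q x)‖ ∂μ
          = ∫⁻ x in p ⁻¹' B', ENNReal.ofReal (|φ| (q x)) ∂μ := by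
        apply lintegral_congr
        intro x
        simp [Real.norm_eq_abs]
      rw [this]
      have h3 := hc₃ B' hB'm hB'b
      simp only [Pi.abs_apply] at h3 ⊢
      rw [h3]
      exact ENNReal.mul_lt_top ENNReal.coe_lt_top
        (lt_of_le_of_ne le_top (hfin B' hB'b))
  -- rewrite the Hausdorff measure of B as a measure on the subtype
  have hHB : ((μH[d]).restrict (Eᗮ : Set (EuclideanSpace ℝ (Fin n)))) B
      = (μH[d] : Measure ↥Eᗮ) B' := by
    rw [Measure.restrict_apply hB]
    have himg : B ∩ (Eᗮ : Set (EuclideanSpace ℝ (Fin n))) = Subtype.val '' B' := by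
      rw [hB', Set.image_preimage_eq_inter_range, Subtype.range_coe]
    rw [himg, isometry_subtype_coe.hausdorffMeasure_image (Or.inl hd0)]
  rw [hSet, integral_eq_lintegral_pos_part_sub_lintegral_neg_part hint, hHB]
  have e₁ : ∫⁻ a, ENNReal.ofReal (φ (q a)) ∂(μ.restrict (p ⁻¹' B'))
      = (c₁ : ℝ≥0∞) * (μH[d] : Measure ↥Eᗮ) B' := hc₁ B' hB'm hB'b
  have e₂ : ∫⁻ a, ENNReal.ofReal (-(φ (q a))) ∂(μ.restrict (p ⁻¹' B'))
      = (c₂ : ℝ≥0∞) * (μH[d] : Measure ↥Eᗮ) B' := by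
    have := hc₂ B' hB'm hB'b
    simpa using this
  rw [e₁, e₂, ENNReal.toReal_mul, ENNReal.toReal_mul, ENNReal.coe_toReal, ENNReal.coe_toReal]
  ring
end
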